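/- Let A be an additive commutative group, regarded as a ℤ-module, and let S, T : Submonoid ℤ be such that every s ∈ S and every t ∈ T are coprime (IsCoprime (s : ℤ) (t : ℤ)). Let ι_S : A → LocalizedModule S A, ι_T : A → LocalizedModule T A, and ι : A → LocalizedModule (S ⊔ T) A be the localization maps, and let j_S : LocalizedModule S A → LocalizedModule (S ⊔ T) A and j_T : LocalizedModule T A → LocalizedModule (S ⊔ T) A be the unique ℤ-linear maps satisfying j_S ∘ ι_S = ι and j_T ∘ ι_T = ι (obtained from the universal property of localized modules, since every element of S, respectively T, acts invertibly on LocalizedModule (S ⊔ T) A). Then the map from A to the fiber product {p : LocalizedModule S A × LocalizedModule T A // j_S p.1 = j_T p.2} given by a ↦ (ι_S a, ι_T a) is a bijection. -/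

import Mathlib

/-- Fracture square for localizations of an abelian group away from coprime sets
of integers: for submonoids `S`, `T` of `ℤ` with every element of `S` coprime to
every element of `T`, the square of localization maps of the `ℤ`-module `A` is a
pullback, i.e. `a ↦ (ι_S a, ι_T a)` is a bijection onto the fiber product over
the localization at `S ⊔ T`. -/
theorem localizedModule_fracture_square
    {A : Type*} [AddCommGroup A] (S T : Submonoid ℤ)
    (hco : ∀ s ∈ S, ∀ t ∈ T, IsCoprime s t)
    (jS : LocalizedModule S A →ₗ[ℤ] LocalizedModule (S ⊔ T) A)
    (jT : LocalizedModule T A →ₗ[ℤ] LocalizedModule (S ⊔ T) A)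
    (hjS : ∀ a : A, jS (LocalizedModule.mkLinearMap S A a) =
      LocalizedModule.mkLinearMap (S ⊔ T) A a)
    (hjT : ∀ a : A, jT (LocalizedModule.mkLinearMap T A a) =
      LocalizedModule.mkLinearMap (S ⊔ T) A a) :
    Function.Bijective (fun a : A =>
      (⟨(LocalizedModule.mkLinearMap S A a, LocalizedModule.mkLinearMap T A a),
        by rw [hjS, hjT]⟩ :
        {p : LocalizedModule S A × LocalizedModule T A // jS p.1 = jT p.2})) := by
  have loc_smul : ∀ (U : Submonoid ℤ) (n : ℤ) (a : A) (u : ↥U),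
      n • (LocalizedModule.mk a u : LocalizedModule U A) = LocalizedModule.mk (n • a) u := by
    intro U n a u
    exact ((@Int.cast_smul_eq_zsmul ℤ (LocalizedModule U A) _ _
      OreLocalization.instModuleOfIsScalarTower n (LocalizedModule.mk a u)).symm.trans
      (LocalizedModule.smul'_mk n a u))
  constructor
  · intro a a' h
    have h1 : LocalizedModule.mk (S := S) a 1 = LocalizedModule.mk a' 1 :=
      congrArg (fun p => p.1.1) h
    have h2 : LocalizedModule.mk (S := T) a 1 = LocalizedModule.mk a' 1 :=
      congrArg (fun p => p.1.2) h
    obtain ⟨u, hu⟩ := LocalizedModule.mk_eq.mp h1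
    obtain ⟨v, hv⟩ := LocalizedModule.mk_eq.mp h2
    simp only [one_smul, Submonoid.smul_def] at hu hv
    obtain ⟨α, β, hαβ⟩ := hco u u.2 v v.2
    calc a = ((α * u + β * v) : ℤ) • a := by rw [hαβ, one_smul]
      _ = α • ((u : ℤ) • a) + β • ((v : ℤ) • a) := by
          rw [add_smul, mul_smul, mul_smul]
      _ = α • ((u : ℤ) • a') + β • ((v : ℤ) • a') := by rw [hu, hv]
      _ = a' := by rw [← mul_smul, ← mul_smul, ← add_smul, hαβ, one_smul]
  · rintro ⟨⟨x, y⟩, hxy⟩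
    simp only at hxy
    suffices h : ∃ a : A, LocalizedModule.mk (S := S) a 1 = x ∧
        LocalizedModule.mk (S := T) a 1 = y by
      obtain ⟨a, ha1, ha2⟩ := h
      exact ⟨a, Subtype.ext (Prod.ext ha1 ha2)⟩
    revert hxy
    induction x using LocalizedModule.induction_on with | _ a s => ?_
    induction y using LocalizedModule.induction_on with | _ b t => ?_
    intro hxy
    have hS : (s : ℤ) • jS (LocalizedModule.mk a s) = LocalizedModule.mk a 1 := by
      rw [← map_smul, loc_smul, ← Submonoid.smul_def, LocalizedModule.mk_cancel]
      exact hjS a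
    have hT : (t : ℤ) • jT (LocalizedModule.mk b t) = LocalizedModule.mk b 1 := by
      rw [← map_smul, loc_smul, ← Submonoid.smul_def, LocalizedModule.mk_cancel]
      exact hjT b
    have key : LocalizedModule.mk (S := S ⊔ T) ((t : ℤ) • a) 1
        = LocalizedModule.mk ((s : ℤ) • b) 1 := by
      have h := congrArg (fun z => (t : ℤ) • (s : ℤ) • z) hxy
      rw [hS, smul_comm ((t : ℤ)) ((s : ℤ)), hT, loc_smul, loc_smul] at h
      exact h
    obtain ⟨u, hu⟩ := LocalizedModule.mk_eq.mp key
    simp only [one_smul, Submonoid.smul_def] at hu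
    obtain ⟨s', hs', t', ht', hst⟩ := Submonoid.mem_sup.mp u.2
    have hrel : (s' * t' * (t : ℤ)) • a = (s' * t' * (s : ℤ)) • b := by
      rw [hst, mul_smul, mul_smul]
      exact hu
    obtain ⟨α, β, hαβ⟩ := hco (s' * s) (mul_mem hs' s.2) (t' * t) (mul_mem ht' t.2)
    refine ⟨(α * s') • a + (β * t') • b, ?_, ?_⟩
    · rw [LocalizedModule.mk_eq]
      refine ⟨⟨s', hs'⟩, ?_⟩
      simp only [one_smul, Submonoid.smul_def, smul_add, ← mul_smul]
      have e2 : (s' * ((s : ℤ) * (β * t'))) • b = (β * (s' * t' * (t : ℤ))) • a := by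
        rw [show s' * ((s : ℤ) * (β * t')) = β * (s' * t' * (s : ℤ)) by ring,
          mul_smul, ← hrel, ← mul_smul]
      rw [e2, ← add_smul]
      congr 1
      linear_combination s' * hαβ
    · rw [LocalizedModule.mk_eq]
      refine ⟨⟨t', ht'⟩, ?_⟩
      simp only [one_smul, Submonoid.smul_def, smul_add, ← mul_smul]
      have e2 : (t' * ((t : ℤ) * (α * s'))) • a = (α * (s' * t' * (s : ℤ))) • b := by
        rw [show t' * ((t : ℤ) * (α * s')) = α * (s' * t' * (t : ℤ)) by ring,
          mul_smul, hrel, ← mul_smul]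
      rw [e2, add_comm, ← add_smul]
      congr 1
      linear_combination t' * hαβ
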